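/- Let Δ₁, Δ₂ be Jordan domains containing 0, let h_t^j denote the intrinsic rotation of ∂Δ_j (the boundary extension of ζ_j⁻¹ ∘ R_t ∘ ζ_j for a Riemann map ζ_j fixing 0), and let φ : ∂Δ₁ → ∂Δ₂ be a homeomorphism satisfying φ ∘ h_t¹ = h_t² ∘ φ for some irrational t. Then for points z₁ ∈ Δ₁, z₂ ∈ Δ₂, the statement 'z₁ and z₂ have the same conformal position relative to markings b and φ(b)' does not depend on the choice of b ∈ ∂Δ₁: if ζ_{1,b}(z₁) = ζ_{2,φ(b)}(z₂) for one choice of b ∈ ∂Δ₁, then the same equality holds for every b' ∈ ∂Δ₁. -/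

import Mathlib

open Set Metric

noncomputable def unitDisk : Set ℂ := Metric.ball (0 : ℂ) 1

noncomputable def rigidRot (t : ℝ) (z : ℂ) : ℂ :=
  Complex.exp (2 * Real.pi * Complex.I * (t : ℂ)) * z

def IsJordanDomain (Δ : Set ℂ) : Prop :=
  IsOpen Δ ∧ IsConnected Δ ∧ Bornology.IsBounded Δ ∧
    ∃ γ : ℝ → ℂ, Continuous γ ∧ (∀ s, γ (s + 1) = γ s) ∧
      Set.InjOn γ (Set.Ico (0 : ℝ) 1) ∧ Set.range γ = frontier Δ

/-- A Riemann map of `Δ` fixing `0`, with a continuous inverse `η`, extending to a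
homeomorphism of closures. -/
def IsRiemannMapPair (Δ : Set ℂ) (ζ η : ℂ → ℂ) : Prop :=
  DifferentiableOn ℂ ζ Δ ∧ Set.BijOn ζ Δ unitDisk ∧
    ContinuousOn ζ (closure Δ) ∧ Set.BijOn ζ (closure Δ) (closure unitDisk) ∧
    ContinuousOn η (closure unitDisk) ∧
    Set.InvOn η ζ (closure Δ) (closure unitDisk) ∧ ζ 0 = 0

/-- A marked Riemann map additionally sends the marked boundary point `b` to `1`. -/
def IsMarkedRiemannMap (Δ : Set ℂ) (b : ℂ) (ζ : ℂ → ℂ) : Prop :=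
  DifferentiableOn ℂ ζ Δ ∧ Set.BijOn ζ Δ unitDisk ∧
    ContinuousOn ζ (closure Δ) ∧ Set.BijOn ζ (closure Δ) (closure unitDisk) ∧
    (∃ η : ℂ → ℂ, ContinuousOn η (closure unitDisk) ∧
      Set.InvOn η ζ (closure Δ) (closure unitDisk)) ∧
    ζ 0 = 0 ∧ ζ b = 1


open Complex Topology Filter

lemma deriv_ne_zero_of_injOn {f : ℂ → ℂ} {Δ : Set ℂ} (hop : IsOpen Δ) (h0 : (0:ℂ) ∈ Δ)
    (hd : DifferentiableOn ℂ f Δ) (hinj : Set.InjOn f Δ) (hf0 : f 0 = 0) :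
    deriv f 0 ≠ 0 := by
  have hA : AnalyticAt ℂ f 0 := hd.analyticAt (hop.mem_nhds h0)
  intro hder
  -- order is not ⊤
  have htop : analyticOrderAt f 0 ≠ ⊤ := by
    intro h
    rw [analyticOrderAt_eq_top] at h
    obtain ⟨z, hz, hz0, hzΔ⟩ :
        ∃ z, f z = 0 ∧ z ≠ 0 ∧ z ∈ Δ := by
      have h2 : ∀ᶠ z in 𝓝 (0:ℂ), f z = 0 ∧ z ∈ Δ := h.and (hop.eventually_mem h0)
      have h3 : ∀ᶠ z in 𝓝[≠] (0:ℂ), f z = 0 ∧ z ∈ Δ := h2.filter_mono nhdsWithin_le_nhds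
      obtain ⟨z, hz⟩ := (h3.and self_mem_nhdsWithin).exists
      exact ⟨z, hz.1.1, hz.2, hz.1.2⟩
    exact hz0 (hinj hzΔ h0 (hz.trans hf0.symm))
  obtain ⟨n, hn⟩ := WithTop.ne_top_iff_exists.mp htop
  obtain ⟨g, hg, hg0, hfg⟩ := (hA.analyticOrderAt_eq_natCast (n := n)).mp hn.symm
  have hn0 : n ≠ 0 := by
    rintro rfl
    have := hfg.self_of_nhds
    simp [hf0] at this
    exact hg0 this.symm
  have hn1 : n ≠ 1 := by
    rintro rfl
    have hd1 : deriv f 0 = g 0 := by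
      have he : deriv f 0 = deriv (fun z => (z - 0) ^ 1 • g z) 0 := Filter.EventuallyEq.deriv_eq hfg
      have hgd : HasDerivAt (fun z => z * g z) (1 * g 0 + 0 * deriv g 0) 0 :=
        (hasDerivAt_id 0).mul hg.differentiableAt.hasDerivAt
      simp only [pow_one, sub_zero, smul_eq_mul] at he
      rw [he, hgd.deriv]
      ring
    exact hg0 (hd1 ▸ hder)
  have hn2 : 2 ≤ n := by omega
  have hnC : (n : ℂ) ≠ 0 := Nat.cast_ne_zero.mpr hn0
  -- n-th root of g
  set w : ℂ := Complex.exp (Complex.log (g 0) / n) with hw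
  have hwn : w ^ n = g 0 := by
    rw [hw, ← Complex.exp_nat_mul]
    rw [mul_div_cancel₀ _ hnC, Complex.exp_log hg0]
  set r : ℂ → ℂ := fun z => Complex.exp (Complex.log (g z / g 0) / n) * w with hr
  have hrne : ∀ z, r z ≠ 0 := fun z =>
    mul_ne_zero (Complex.exp_ne_zero _) (Complex.exp_ne_zero _)
  set φ : ℂ → ℂ := fun z => z * r z with hφ
  have hφa : AnalyticAt ℂ φ 0 := by
    apply analyticAt_id.mul
    apply AnalyticAt.mul _ analyticAt_const
    apply AnalyticAt.cexp
    apply AnalyticAt.div _ analyticAt_const hnC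
    apply AnalyticAt.clog (hg.div analyticAt_const hg0)
    rw [Pi.div_apply, div_self hg0]
    exact Complex.one_mem_slitPlane
  have hφ0 : φ 0 = 0 := by simp [hφ]
  -- eventually f = φ ^ n
  have hgev : ∀ᶠ z in 𝓝 (0:ℂ), g z ≠ 0 :=
    hg.continuousAt.eventually_ne hg0
  have hfφ : ∀ᶠ z in 𝓝 (0:ℂ), f z = φ z ^ n := by
    filter_upwards [hfg, hgev] with z h1 h2
    rw [h1, hφ]
    simp only [sub_zero, smul_eq_mul, mul_pow, hr]
    rw [← Complex.exp_nat_mul, mul_div_cancel₀ _ hnC,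
      Complex.exp_log (div_ne_zero h2 hg0), hwn]
    field_simp
  -- φ is not eventually constant
  have hnc : ¬ ∀ᶠ z in 𝓝 (0:ℂ), φ z = φ 0 := by
    intro h
    have h3 : ∀ᶠ z in 𝓝[≠] (0:ℂ), φ z = φ 0 := h.filter_mono nhdsWithin_le_nhds
    obtain ⟨z, hz1, hz2⟩ := (h3.and self_mem_nhdsWithin).exists
    rw [hφ0, hφ] at hz1
    exact (mul_ne_zero hz2 (hrne z)) hz1
  rcases hφa.eventually_constant_or_nhds_le_map_nhds with h | h
  · exact hnc h
  -- pick small ball inside image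
  obtain ⟨W, hWnhds, hWsub⟩ := eventually_iff_exists_mem.mp (hfφ.and (hop.eventually_mem h0))
  have himg : φ '' W ∈ 𝓝 (0:ℂ) := by
    rw [← hφ0]
    exact h (image_mem_map hWnhds)
  obtain ⟨ε, hε, hball⟩ := Metric.mem_nhds_iff.mp himg
  set u : ℂ := ((ε/2 : ℝ) : ℂ) with hu
  have hu0 : u ≠ 0 := by
    simp [hu, Complex.ofReal_ne_zero]
    positivity
  have hunorm : ‖u‖ < ε := by
    simp only [hu, Complex.norm_real, Real.norm_eq_abs]
    rw [abs_of_pos (by positivity)]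
    linarith
  set ω : ℂ := Complex.exp (2 * Real.pi * Complex.I / n) with hω
  have hωn : ω ^ n = 1 := by
    rw [hω, ← Complex.exp_nat_mul, mul_div_cancel₀ _ hnC, Complex.exp_two_pi_mul_I]
  have hω1 : ω ≠ 1 := by
    intro hcon
    rw [hω, Complex.exp_eq_one_iff] at hcon
    obtain ⟨k, hk⟩ := hcon
    have h2πI : (2 * (Real.pi:ℂ) * Complex.I : ℂ) ≠ 0 := by
      simp [Complex.I_ne_zero, Real.pi_ne_zero]
    have hkn : (k : ℂ) * n = 1 := by
      field_simp at hk
      apply mul_left_cancel₀ h2πI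
      linear_combination (-(2 * (Real.pi:ℂ) * Complex.I)) * hk
    have : ((k * (n:ℤ) : ℤ) : ℂ) = ((1 : ℤ) : ℂ) := by push_cast; linear_combination hkn
    have hkn' : k * (n : ℤ) = 1 := by exact_mod_cast this
    have : (n : ℤ) ≤ 1 := Int.le_of_dvd one_pos ⟨k, by linarith [hkn']⟩
    omega
  have hωnorm : ‖ω‖ = 1 := by
    have harg : (2 * (Real.pi:ℂ) * Complex.I / n) = ((2*Real.pi/n : ℝ) : ℂ) * Complex.I := by
      push_cast; ring
    rw [hω, harg, Complex.norm_exp]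
    simp
  obtain ⟨a, haW, haφ⟩ := hball (mem_ball_zero_iff.mpr hunorm)
  obtain ⟨b, hbW, hbφ⟩ := hball (a := ω * u) (by
    rw [mem_ball_zero_iff, norm_mul, hωnorm, one_mul]
    exact hunorm)
  have hfa : f a = u ^ n := by rw [(hWsub a haW).1, haφ]
  have hfb : f b = u ^ n := by
    rw [(hWsub b hbW).1, hbφ, mul_pow, hωn, one_mul]
  have hab : a = b := hinj (hWsub a haW).2 (hWsub b hbW).2 (hfa.trans hfb.symm)
  rw [hab, hbφ] at haφ
  exact hω1 (mul_right_cancel₀ hu0 (haφ.trans (one_mul u).symm))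

lemma closure_ball_one : closure (ball (0:ℂ) 1) = closedBall (0:ℂ) 1 :=
  closure_ball 0 one_ne_zero

lemma mem_frontier_of_open {Δ : Set ℂ} (hop : IsOpen Δ) {z : ℂ}
    (hc : z ∈ closure Δ) (hn : z ∉ Δ) : z ∈ frontier Δ :=
  ⟨hc, by rwa [hop.interior_eq]⟩

lemma not_mem_of_frontier {Δ : Set ℂ} (hop : IsOpen Δ) {z : ℂ}
    (hz : z ∈ frontier Δ) : z ∉ Δ := by
  intro h
  exact hz.2 (by rwa [hop.interior_eq])

lemma frontier_norm_one {Δ : Set ℂ} (hop : IsOpen Δ) {ζ : ℂ → ℂ}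
    (hζb : Set.BijOn ζ Δ (ball (0:ℂ) 1))
    (hζcb : Set.BijOn ζ (closure Δ) (closedBall (0:ℂ) 1)) :
    ∀ z ∈ frontier Δ, ‖ζ z‖ = 1 := by
  intro z hz
  have hzc : z ∈ closure Δ := frontier_subset_closure hz
  have h1 : ‖ζ z‖ ≤ 1 := by
    have := hζcb.mapsTo hzc
    rwa [mem_closedBall_zero_iff] at this
  rcases eq_or_lt_of_le h1 with h | h
  · exact h
  exfalso
  obtain ⟨z', hz', hz'e⟩ := hζb.surjOn (mem_ball_zero_iff.mpr h)
  have : z' = z := hζcb.injOn (subset_closure hz') hzc hz'e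
  exact not_mem_of_frontier hop hz (this ▸ hz')

lemma ratio_const {Δ : Set ℂ} (hop : IsOpen Δ) (hconn : IsConnected Δ)
    (hbd : Bornology.IsBounded Δ) (h0 : (0:ℂ) ∈ Δ)
    {ζ ξ : ℂ → ℂ}
    (hζd : DifferentiableOn ℂ ζ Δ) (hζb : Set.BijOn ζ Δ (ball (0:ℂ) 1))
    (hζc : ContinuousOn ζ (closure Δ)) (hζcb : Set.BijOn ζ (closure Δ) (closedBall (0:ℂ) 1))
    (hζ0 : ζ 0 = 0)
    (hξd : DifferentiableOn ℂ ξ Δ) (hξb : Set.BijOn ξ Δ (ball (0:ℂ) 1))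
    (hξc : ContinuousOn ξ (closure Δ)) (hξcb : Set.BijOn ξ (closure Δ) (closedBall (0:ℂ) 1))
    (hξ0 : ξ 0 = 0) :
    ∃ c : ℂ, ‖c‖ = 1 ∧ ∀ z ∈ closure Δ, ξ z = c * ζ z := by
  have hmem : Δ ∈ 𝓝 (0:ℂ) := hop.mem_nhds h0
  have h0c : (0:ℂ) ∈ closure Δ := subset_closure h0
  set A := dslope ζ 0 with hA
  set B := dslope ξ 0 with hB
  have hAd : DifferentiableOn ℂ A Δ := (differentiableOn_dslope hmem).mpr hζd
  have hBd : DifferentiableOn ℂ B Δ := (differentiableOn_dslope hmem).mpr hξd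
  -- nonvanishing of ζ, ξ away from 0 on the closure
  have hζne : ∀ z ∈ closure Δ, z ≠ 0 → ζ z ≠ 0 := by
    intro z hz hz0 h
    exact hz0 (hζcb.injOn hz h0c (h.trans hζ0.symm))
  have hξne : ∀ z ∈ closure Δ, z ≠ 0 → ξ z ≠ 0 := by
    intro z hz hz0 h
    exact hz0 (hξcb.injOn hz h0c (h.trans hξ0.symm))
  -- dslope formulas away from 0
  have hAval : ∀ z : ℂ, z ≠ 0 → A z = ζ z / z := by
    intro z hz0
    rw [hA, dslope_of_ne _ hz0, slope_def_field, hζ0, sub_zero, sub_zero]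
  have hBval : ∀ z : ℂ, z ≠ 0 → B z = ξ z / z := by
    intro z hz0
    rw [hB, dslope_of_ne _ hz0, slope_def_field, hξ0, sub_zero, sub_zero]
  have hAne : ∀ z ∈ closure Δ, A z ≠ 0 := by
    intro z hz
    rcases eq_or_ne z 0 with rfl | hz0
    · simpa [hA, dslope_same] using
        deriv_ne_zero_of_injOn hop h0 hζd hζb.injOn hζ0
    · rw [hAval z hz0]
      exact div_ne_zero (hζne z hz hz0) hz0
  have hBne : ∀ z ∈ closure Δ, B z ≠ 0 := by
    intro z hz
    rcases eq_or_ne z 0 with rfl | hz0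
    · simpa [hB, dslope_same] using
        deriv_ne_zero_of_injOn hop h0 hξd hξb.injOn hξ0
    · rw [hBval z hz0]
      exact div_ne_zero (hξne z hz hz0) hz0
  -- continuity of A and B on the closure
  have contclo : ∀ (P p : ℂ → ℂ), DifferentiableOn ℂ P Δ → ContinuousOn p (closure Δ) →
      (∀ w : ℂ, w ≠ 0 → P w = p w / w) → ContinuousOn P (closure Δ) := by
    intro P p hPd hpc hPv
    intro z hz
    by_cases hzΔ : z ∈ Δ
    · exact ((hPd.differentiableAt (hop.mem_nhds hzΔ)).continuousAt).continuousWithinAt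
    · have hz0 : z ≠ 0 := fun h => hzΔ (h ▸ h0)
      apply ContinuousWithinAt.congr_of_eventuallyEq
        (f := fun w => p w / w) ((hpc z hz).div continuousWithinAt_id hz0)
      · filter_upwards [eventually_nhdsWithin_of_eventually_nhds
          (eventually_ne_nhds hz0)] with w hw
        exact hPv w hw
      · exact hPv z hz0
  have hAc : ContinuousOn A (closure Δ) := contclo A ζ hAd hζc hAval
  have hBc : ContinuousOn B (closure Δ) := contclo B ξ hBd hξc hBval
  -- the quotient q = B / A
  set q : ℂ → ℂ := fun z => B z / A z with hq
  have hqd : DifferentiableOn ℂ q Δ :=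
    hBd.div hAd (fun w hw => hAne w (subset_closure hw))
  have hqc : ContinuousOn q (closure Δ) :=
    hBc.div hAc hAne
  have hq'd : DifferentiableOn ℂ (fun z => A z / B z) Δ :=
    hAd.div hBd (fun w hw => hBne w (subset_closure hw))
  have hq'c : ContinuousOn (fun z => A z / B z) (closure Δ) :=
    hAc.div hBc hBne
  -- boundary values have modulus one
  have hζfr := frontier_norm_one hop hζb hζcb
  have hξfr := frontier_norm_one hop hξb hξcb
  have hfr0 : ∀ z ∈ frontier Δ, z ≠ 0 :=
    fun z hz h => (not_mem_of_frontier hop hz) (h ▸ h0)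
  have hfrq : ∀ z ∈ frontier Δ, ‖q z‖ = 1 := by
    intro z hz
    have hz0 := hfr0 z hz
    rw [hq]
    simp only
    rw [hAval z hz0, hBval z hz0, norm_div, norm_div, norm_div,
      hζfr z hz, hξfr z hz]
    have : ‖z‖ ≠ 0 := norm_ne_zero_iff.mpr hz0
    field_simp
  have hfrq' : ∀ z ∈ frontier Δ, ‖A z / B z‖ = 1 := by
    intro z hz
    have h1 : A z / B z = (q z)⁻¹ := by rw [hq]; simp only; rw [inv_div]
    rw [h1, norm_inv, hfrq z hz]
    norm_num
  -- maximum modulus principle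
  have hqle : ∀ z ∈ closure Δ, ‖q z‖ ≤ 1 :=
    fun z hz => Complex.norm_le_of_forall_mem_frontier_norm_le hbd ⟨hqd, hqc⟩
      (fun w hw => le_of_eq (hfrq w hw)) hz
  have hq'le : ∀ z ∈ closure Δ, ‖A z / B z‖ ≤ 1 :=
    fun z hz => Complex.norm_le_of_forall_mem_frontier_norm_le hbd ⟨hq'd, hq'c⟩
      (fun w hw => le_of_eq (hfrq' w hw)) hz
  have hqeq : ∀ z ∈ closure Δ, ‖q z‖ = 1 := by
    intro z hz
    have h1 := hqle z hz
    have h2 := hq'le z hz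
    rw [show A z / B z = (q z)⁻¹ by rw [hq]; simp only; rw [inv_div], norm_inv] at h2
    have hqz : q z ≠ 0 := div_ne_zero (hBne z hz) (hAne z hz)
    have : (0:ℝ) < ‖q z‖ := norm_pos_iff.mpr hqz
    rw [inv_le_one_iff₀] at h2
    rcases h2 with h2 | h2
    · linarith
    · linarith
  -- q is constant by the maximum principle
  have hmax : IsMaxOn (norm ∘ q) Δ 0 := by
    intro z hz
    simp only [Function.comp_apply]
    rw [hqeq 0 h0c]
    exact hqle z (subset_closure hz)
  have hconst : Set.EqOn q (Function.const ℂ (q 0)) Δ :=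
    Complex.eqOn_of_isPreconnected_of_isMaxOn_norm hconn.isPreconnected hop hqd h0 hmax
  refine ⟨q 0, hqeq 0 h0c, ?_⟩
  -- first on Δ
  have hΔeq : ∀ z ∈ Δ, ξ z = q 0 * ζ z := by
    intro z hz
    rcases eq_or_ne z 0 with rfl | hz0
    · rw [hζ0, hξ0, mul_zero]
    · have h1 : q z = q 0 := hconst hz
      rw [hq] at h1
      simp only at h1
      rw [hBval z hz0, hAval z hz0] at h1
      have hζz : ζ z ≠ 0 := hζne z (subset_closure hz) hz0
      have h2 : ξ z / ζ z = q 0 := by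
        show ξ z / ζ z = B 0 / A 0
        rw [← h1]
        field_simp
      rw [div_eq_iff hζz] at h2
      rw [h2, mul_comm]
  -- extend to the closure by continuity
  intro z hzc
  have hne : (𝓝[Δ] z).NeBot := mem_closure_iff_nhdsWithin_neBot.mp hzc
  have h1 : Tendsto ξ (𝓝[Δ] z) (𝓝 (ξ z)) :=
    (hξc z hzc).mono subset_closure
  have h2 : Tendsto (fun w => q 0 * ζ w) (𝓝[Δ] z) (𝓝 (q 0 * ζ z)) :=
    Filter.Tendsto.const_mul (q 0) ((hζc z hzc).mono subset_closure)
  have h3 : Tendsto ξ (𝓝[Δ] z) (𝓝 (q 0 * ζ z)) := by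
    apply h2.congr'
    filter_upwards [self_mem_nhdsWithin] with w hw
    exact (hΔeq w hw).symm
  exact tendsto_nhds_unique h1 h3

lemma dense_orbit {t : ℝ} (ht : Irrational t) (v : ℂ) (hv : ‖v‖ = 1) :
    ∀ w : ℂ, ‖w‖ = 1 →
      w ∈ closure {z : ℂ | ∃ m : ℤ, z = Complex.exp (2 * Real.pi * Complex.I * t) ^ m * v} := by
  intro w hw
  -- the subgroup ℤ + tℤ of ℝ
  set S : AddSubgroup ℝ :=
    { carrier := {x : ℝ | ∃ n m : ℤ, x = n + m * t}
      zero_mem' := ⟨0, 0, by simp⟩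
      add_mem' := by
        rintro a b ⟨n₁, m₁, rfl⟩ ⟨n₂, m₂, rfl⟩
        exact ⟨n₁ + n₂, m₁ + m₂, by push_cast; ring⟩
      neg_mem' := by
        rintro a ⟨n, m, rfl⟩
        exact ⟨-n, -m, by push_cast; ring⟩ } with hS
  have hdense : Dense (S : Set ℝ) := by
    rcases S.dense_or_cyclic with h | ⟨a, ha⟩
    · exact h
    · exfalso
      have h1 : (1:ℝ) ∈ S := ⟨1, 0, by simp⟩
      have h2 : t ∈ S := ⟨0, 1, by simp⟩
      rw [ha] at h1 h2
      obtain ⟨n, hn⟩ := AddSubgroup.mem_closure_singleton.mp h1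
      obtain ⟨m, hm⟩ := AddSubgroup.mem_closure_singleton.mp h2
      have hn0 : n ≠ 0 := by
        rintro rfl
        simp at hn
      have ha0 : a = 1 / n := by
        field_simp
        rw [mul_comm]
        simpa [zsmul_eq_mul] using hn
      apply ht
      refine ⟨(m : ℚ) / (n : ℚ), ?_⟩
      rw [← hm, ha0, zsmul_eq_mul]
      push_cast
      field_simp
  -- map to the circle
  set F : ℝ → ℂ := fun x => Complex.exp (2 * Real.pi * Complex.I * x) * v with hF
  have hFc : Continuous F := by
    apply Continuous.mul _ continuous_const
    apply Continuous.cexp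
    exact (continuous_const.mul Complex.continuous_ofReal)
  -- w is in the image of F
  have hx : ∃ x : ℝ, F x = w := by
    refine ⟨(w / v).arg / (2 * Real.pi), ?_⟩
    have hπ : (2 * Real.pi : ℝ) ≠ 0 := by positivity
    have hπC : ((Real.pi : ℂ)) ≠ 0 := by exact_mod_cast Real.pi_ne_zero
    have h1 : (2 * Real.pi * Complex.I * (((w / v).arg / (2 * Real.pi) : ℝ) : ℂ))
        = ((w / v).arg : ℂ) * Complex.I := by
      push_cast
      field_simp
    rw [hF]
    simp only
    rw [h1]
    have hv0 : v ≠ 0 := by intro h; rw [h] at hv; simp at hv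
    have habs : ‖w / v‖ = 1 := by
      rw [norm_div]
      simp only [hw, hv]
      norm_num
    have := Complex.norm_mul_exp_arg_mul_I (w / v)
    rw [habs] at this
    simp only [Complex.ofReal_one, one_mul] at this
    rw [this]
    field_simp
  obtain ⟨x, hxw⟩ := hx
  -- F maps S into the orbit
  have hFS : F '' (S : Set ℝ) ⊆
      {z : ℂ | ∃ m : ℤ, z = Complex.exp (2 * Real.pi * Complex.I * t) ^ m * v} := by
    rintro z ⟨y, ⟨n, m, rfl⟩, rfl⟩
    refine ⟨m, ?_⟩
    rw [hF]
    simp only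
    push_cast
    rw [mul_add, Complex.exp_add]
    have h1 : Complex.exp (2 * Real.pi * Complex.I * n) = 1 := by
      have : (2 * Real.pi * Complex.I * n : ℂ) = (n : ℤ) * (2 * Real.pi * Complex.I) := by
        push_cast; ring
      rw [this, Complex.exp_int_mul_two_pi_mul_I]
    have h2 : Complex.exp (2 * Real.pi * Complex.I * (m * t)) =
        Complex.exp (2 * Real.pi * Complex.I * t) ^ (m : ℤ) := by
      rw [← Complex.exp_int_mul]
      congr 1
      push_cast
      ring
    rw [h1, h2, one_mul]
  -- conclude by continuity
  have hwcl : w ∈ closure (F '' (S : Set ℝ)) := by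
    rw [← hxw]
    apply image_closure_subset_closure_image hFc
    exact mem_image_of_mem F (hdense x)
  exact closure_mono hFS hwcl

lemma sphere_rigid {t : ℝ} (ht : Irrational t) {ψ : ℂ → ℂ} {c v : ℂ}
    (hψ : ContinuousOn ψ (sphere (0:ℂ) 1))
    (hequi : ∀ w ∈ sphere (0:ℂ) 1,
      ψ (Complex.exp (2 * Real.pi * Complex.I * t) * w)
        = Complex.exp (2 * Real.pi * Complex.I * t) * ψ w)
    (hv : v ∈ sphere (0:ℂ) 1) (hψv : ψ v = c * v) :
    ∀ w ∈ sphere (0:ℂ) 1, ψ w = c * w := by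
  set u : ℂ := Complex.exp (2 * Real.pi * Complex.I * t) with hu
  have hun : ‖u‖ = 1 := by
    have : (2 * (Real.pi:ℂ) * Complex.I * t) = ((2 * Real.pi * t : ℝ) : ℂ) * Complex.I := by
      push_cast; ring
    rw [hu, this, Complex.norm_exp]
    simp
  have hu0 : u ≠ 0 := Complex.exp_ne_zero _
  have hsp : ∀ m : ℤ, u ^ m * v ∈ sphere (0:ℂ) 1 := by
    intro m
    rw [mem_sphere_zero_iff_norm, norm_mul, norm_zpow, hun,
      mem_sphere_zero_iff_norm.mp hv]
    simp
  have hstep : ∀ m : ℤ, ψ (u ^ m * v) = c * (u ^ m * v) := by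
    intro m
    induction m using Int.induction_on with
    | zero => simpa using hψv
    | succ k ih =>
      have h1 : u ^ ((k:ℤ) + 1) * v = u * (u ^ (k:ℤ) * v) := by
        rw [zpow_add₀ hu0, zpow_one]; ring
      rw [h1, hequi _ (hsp k), ih]
      ring
    | pred k ih =>
      have h1 := hequi _ (hsp (-(k:ℤ) - 1))
      have h2 : u * (u ^ (-(k:ℤ) - 1) * v) = u ^ (-(k:ℤ)) * v := by
        rw [← mul_assoc, ← zpow_one_add₀ hu0]
        ring_nf
      rw [h2, ih] at h1
      have h3 : ψ (u ^ (-(k:ℤ) - 1) * v) = u⁻¹ * (c * (u ^ (-(k:ℤ)) * v)) := by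
        rw [h1, ← mul_assoc, inv_mul_cancel₀ hu0, one_mul]
      rw [h3, zpow_sub₀ hu0, zpow_one, div_eq_mul_inv]
      ring
  intro w hw
  have hv1 : ‖v‖ = 1 := mem_sphere_zero_iff_norm.mp hv
  have hw1 : ‖w‖ = 1 := mem_sphere_zero_iff_norm.mp hw
  have hcl := dense_orbit ht v hv1 w hw1
  set T : Set ℂ := {z : ℂ | ∃ m : ℤ, z = u ^ m * v} with hT
  have hTs : T ⊆ sphere (0:ℂ) 1 := by
    rintro z ⟨m, rfl⟩
    exact hsp m
  have hne : (𝓝[T] w).NeBot := mem_closure_iff_nhdsWithin_neBot.mp hcl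
  have h1 : Tendsto ψ (𝓝[T] w) (𝓝 (ψ w)) := (hψ w hw).mono hTs
  have h2 : Tendsto (fun z => c * z) (𝓝[T] w) (𝓝 (c * w)) :=
    (Filter.Tendsto.const_mul c (tendsto_id.mono_left nhdsWithin_le_nhds))
  have h3 : Tendsto ψ (𝓝[T] w) (𝓝 (c * w)) := by
    apply h2.congr'
    filter_upwards [self_mem_nhdsWithin] with z hz
    obtain ⟨m, rfl⟩ := hz
    exact (hstep m).symm
  exact tendsto_nhds_unique h1 h3

/-- If `φ : ∂Δ₁ → ∂Δ₂` is a homeomorphism which is equivariant for the intrinsic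
rotations by an irrational angle `t`, then "same conformal position" relative to the
markings `b` and `φ b` is independent of the choice of `b ∈ ∂Δ₁`. -/
theorem same_conformal_position_independent_of_marking
    (Δ₁ Δ₂ : Set ℂ) (hΔ₁ : IsJordanDomain Δ₁) (hΔ₂ : IsJordanDomain Δ₂)
    (h0₁ : (0 : ℂ) ∈ Δ₁) (h0₂ : (0 : ℂ) ∈ Δ₂)
    (ζ₁ η₁ ζ₂ η₂ : ℂ → ℂ)
    (hζ₁ : IsRiemannMapPair Δ₁ ζ₁ η₁) (hζ₂ : IsRiemannMapPair Δ₂ ζ₂ η₂)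
    (t : ℝ) (ht : Irrational t)
    (φ : ℂ → ℂ) (hφcont : ContinuousOn φ (frontier Δ₁))
    (hφbij : Set.BijOn φ (frontier Δ₁) (frontier Δ₂))
    (hφinv : ∃ χ : ℂ → ℂ, ContinuousOn χ (frontier Δ₂) ∧
      Set.InvOn χ φ (frontier Δ₁) (frontier Δ₂))
    -- equivariance: φ ∘ h_t¹ = h_t² ∘ φ on ∂Δ₁, where h_t^j = η_j ∘ R_t ∘ ζ_j
    (hequiv : ∀ z ∈ frontier Δ₁, φ (η₁ (rigidRot t (ζ₁ z))) = η₂ (rigidRot t (ζ₂ (φ z))))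
    (z₁ z₂ : ℂ) (hz₁ : z₁ ∈ Δ₁) (hz₂ : z₂ ∈ Δ₂)
    (b : ℂ) (hb : b ∈ frontier Δ₁) (ξ₁ ξ₂ : ℂ → ℂ)
    (hξ₁ : IsMarkedRiemannMap Δ₁ b ξ₁) (hξ₂ : IsMarkedRiemannMap Δ₂ (φ b) ξ₂)
    (hsame : ξ₁ z₁ = ξ₂ z₂) :
    ∀ b' ∈ frontier Δ₁, ∀ ξ₁' ξ₂' : ℂ → ℂ,
      IsMarkedRiemannMap Δ₁ b' ξ₁' → IsMarkedRiemannMap Δ₂ (φ b') ξ₂' →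
      ξ₁' z₁ = ξ₂' z₂ := by
  obtain ⟨hop₁, hconn₁, hbd₁, -⟩ := hΔ₁
  obtain ⟨hop₂, hconn₂, hbd₂, -⟩ := hΔ₂
  obtain ⟨hζ₁d, hζ₁b, hζ₁c, hζ₁cb, hη₁c, hη₁inv, hζ₁0⟩ := hζ₁
  obtain ⟨hζ₂d, hζ₂b, hζ₂c, hζ₂cb, hη₂c, hη₂inv, hζ₂0⟩ := hζ₂
  obtain ⟨hξ₁d, hξ₁b, hξ₁c, hξ₁cb, -, hξ₁0, hξ₁b1⟩ := hξ₁
  obtain ⟨hξ₂d, hξ₂b, hξ₂c, hξ₂cb, -, hξ₂0, hξ₂b1⟩ := hξ₂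
  intro b' hb' ξ₁' ξ₂' hξ₁' hξ₂'
  obtain ⟨hξ₁'d, hξ₁'b, hξ₁'c, hξ₁'cb, -, hξ₁'0, hξ₁'b1⟩ := hξ₁'
  obtain ⟨hξ₂'d, hξ₂'b, hξ₂'c, hξ₂'cb, -, hξ₂'0, hξ₂'b1⟩ := hξ₂'
  unfold unitDisk at hζ₁b hζ₁cb hη₁c hη₁inv hζ₂b hζ₂cb hη₂c hη₂inv hξ₁b hξ₁cb hξ₂b hξ₂cb hξ₁'b hξ₁'cb hξ₂'b hξ₂'cb
  rw [closure_ball_one] at hζ₁cb hη₁c hη₁inv hζ₂cb hη₂c hη₂inv hξ₁cb hξ₂cb hξ₁'cb hξ₂'cb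
  -- the four rotation constants
  obtain ⟨c₁, hc₁n, hc₁⟩ := ratio_const hop₁ hconn₁ hbd₁ h0₁ hζ₁d hζ₁b hζ₁c hζ₁cb hζ₁0
    hξ₁d hξ₁b hξ₁c hξ₁cb hξ₁0
  obtain ⟨c₂, hc₂n, hc₂⟩ := ratio_const hop₂ hconn₂ hbd₂ h0₂ hζ₂d hζ₂b hζ₂c hζ₂cb hζ₂0
    hξ₂d hξ₂b hξ₂c hξ₂cb hξ₂0
  obtain ⟨c₁', hc₁'n, hc₁'⟩ := ratio_const hop₁ hconn₁ hbd₁ h0₁ hζ₁d hζ₁b hζ₁c hζ₁cb hζ₁0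
    hξ₁'d hξ₁'b hξ₁'c hξ₁'cb hξ₁'0
  obtain ⟨c₂', hc₂'n, hc₂'⟩ := ratio_const hop₂ hconn₂ hbd₂ h0₂ hζ₂d hζ₂b hζ₂c hζ₂cb hζ₂0
    hξ₂'d hξ₂'b hξ₂'c hξ₂'cb hξ₂'0
  have hfr₁ := frontier_norm_one hop₁ hζ₁b hζ₁cb
  have hfr₂ := frontier_norm_one hop₂ hζ₂b hζ₂cb
  -- η₁ maps the sphere to the frontier
  have hηmem : ∀ (Δ : Set ℂ) (ζ η : ℂ → ℂ), IsOpen Δ → Set.BijOn ζ Δ (ball (0:ℂ) 1) →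
      Set.BijOn ζ (closure Δ) (closedBall (0:ℂ) 1) →
      Set.InvOn η ζ (closure Δ) (closedBall (0:ℂ) 1) →
      ∀ w : ℂ, ‖w‖ = 1 → η w ∈ frontier Δ ∧ ζ (η w) = w := by
    intro Δ ζ η hop hζb hζcb hηinv w hw
    have hwc : w ∈ closedBall (0:ℂ) 1 := by
      rw [mem_closedBall_zero_iff, hw]
    obtain ⟨z, hzc, hzw⟩ := hζcb.surjOn hwc
    have hzz : η w = z := by rw [← hzw]; exact hηinv.1 hzc
    refine ⟨?_, by rw [hzz, hzw]⟩
    rw [hzz]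
    apply mem_frontier_of_open hop hzc
    intro hzΔ
    have h1 : ζ z ∈ ball (0:ℂ) 1 := hζb.mapsTo hzΔ
    rw [hzw, mem_ball_zero_iff, hw] at h1
    exact lt_irrefl _ h1
  have hη₁mem := hηmem Δ₁ ζ₁ η₁ hop₁ hζ₁b hζ₁cb hη₁inv
  have hη₂mem := hηmem Δ₂ ζ₂ η₂ hop₂ hζ₂b hζ₂cb hη₂inv
  set u : ℂ := Complex.exp (2 * Real.pi * Complex.I * t) with hu
  have hun : ‖u‖ = 1 := by
    have h1 : (2 * (Real.pi:ℂ) * Complex.I * t) = ((2 * Real.pi * t : ℝ) : ℂ) * Complex.I := by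
      push_cast; ring
    rw [hu, h1, Complex.norm_exp]
    simp
  -- the comparison map on the circle
  set ψ : ℂ → ℂ := fun w => c₂ * ζ₂ (φ (η₁ w)) with hψ
  have hmapsζη : ∀ w ∈ sphere (0:ℂ) 1, η₁ w ∈ frontier Δ₁ := by
    intro w hw
    exact (hη₁mem w (mem_sphere_zero_iff_norm.mp hw)).1
  have hψc : ContinuousOn ψ (sphere (0:ℂ) 1) := by
    apply continuousOn_const.mul
    have hin : ContinuousOn η₁ (sphere (0:ℂ) 1) := hη₁c.mono sphere_subset_closedBall
    have hmid : ContinuousOn (fun w => φ (η₁ w)) (sphere (0:ℂ) 1) :=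
      ContinuousOn.comp hφcont hin hmapsζη
    exact ContinuousOn.comp (hζ₂c.mono frontier_subset_closure) hmid
      (fun w hw => hφbij.mapsTo (hmapsζη w hw))
  have hψequi : ∀ w ∈ sphere (0:ℂ) 1, ψ (u * w) = u * ψ w := by
    intro w hw
    have hw1 : ‖w‖ = 1 := mem_sphere_zero_iff_norm.mp hw
    obtain ⟨hzfr, hzw⟩ := hη₁mem w hw1
    have heq := hequiv (η₁ w) hzfr
    rw [hzw] at heq
    have hr1 : rigidRot t w = u * w := by rw [hu]; rfl
    rw [hr1] at heq
    have hφz : φ (η₁ w) ∈ frontier Δ₂ := hφbij.mapsTo hzfr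
    have hζφz : ‖ζ₂ (φ (η₁ w))‖ = 1 := hfr₂ _ hφz
    have hr2 : rigidRot t (ζ₂ (φ (η₁ w))) = u * ζ₂ (φ (η₁ w)) := by rw [hu]; rfl
    rw [hr2] at heq
    have hyc : u * ζ₂ (φ (η₁ w)) ∈ closedBall (0:ℂ) 1 := by
      rw [mem_closedBall_zero_iff, norm_mul, hun, hζφz]
      norm_num
    have h2 : ζ₂ (η₂ (u * ζ₂ (φ (η₁ w)))) = u * ζ₂ (φ (η₁ w)) := hη₂inv.2 hyc
    rw [hψ]
    simp only
    rw [heq, h2]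
    ring
  -- agreement at ζ₁ b
  have hbc : b ∈ closure Δ₁ := frontier_subset_closure hb
  have hb'c : b' ∈ closure Δ₁ := frontier_subset_closure hb'
  have hv : ζ₁ b ∈ sphere (0:ℂ) 1 := mem_sphere_zero_iff_norm.mpr (hfr₁ b hb)
  have hφb : φ b ∈ frontier Δ₂ := hφbij.mapsTo hb
  have hφb' : φ b' ∈ frontier Δ₂ := hφbij.mapsTo hb'
  have hψv : ψ (ζ₁ b) = c₁ * ζ₁ b := by
    rw [hψ]
    simp only
    rw [hη₁inv.1 hbc]
    have e1 : c₂ * ζ₂ (φ b) = ξ₂ (φ b) := (hc₂ (φ b) (frontier_subset_closure hφb)).symm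
    have e2 : c₁ * ζ₁ b = ξ₁ b := (hc₁ b hbc).symm
    rw [e1, e2, hξ₁b1, hξ₂b1]
  have hrig := sphere_rigid ht hψc hψequi hv hψv
  -- evaluate at ζ₁ b'
  have hv' : ζ₁ b' ∈ sphere (0:ℂ) 1 := mem_sphere_zero_iff_norm.mpr (hfr₁ b' hb')
  have hkey : c₂ * ζ₂ (φ b') = c₁ * ζ₁ b' := by
    have := hrig (ζ₁ b') hv'
    rw [hψ] at this
    simp only at this
    rwa [hη₁inv.1 hb'c] at this
  -- final algebra
  have hz₁c : z₁ ∈ closure Δ₁ := subset_closure hz₁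
  have hz₂c : z₂ ∈ closure Δ₂ := subset_closure hz₂
  have e1 : c₁' * ζ₁ b' = 1 := by rw [← hc₁' b' hb'c, hξ₁'b1]
  have e2 : c₂' * ζ₂ (φ b') = 1 := by
    rw [← hc₂' (φ b') (frontier_subset_closure hφb'), hξ₂'b1]
  have e4 : c₁ * ζ₁ z₁ = c₂ * ζ₂ z₂ := by
    rw [← hc₁ z₁ hz₁c, ← hc₂ z₂ hz₂c]
    exact hsame
  have hb'0 : ζ₁ b' ≠ 0 := by
    intro h
    have := hfr₁ b' hb'
    rw [h] at this
    simp at this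
  have hφb'0 : ζ₂ (φ b') ≠ 0 := by
    intro h
    have := hfr₂ (φ b') hφb'
    rw [h] at this
    simp at this
  have hc₁0 : c₁ ≠ 0 := by intro h; rw [h] at hc₁n; simp at hc₁n
  have hc₂0 : c₂ ≠ 0 := by intro h; rw [h] at hc₂n; simp at hc₂n
  have hC₁' : c₁' = (ζ₁ b')⁻¹ := eq_inv_of_mul_eq_one_left (by linear_combination e1)
  have hC₂' : c₂' = (ζ₂ (φ b'))⁻¹ := eq_inv_of_mul_eq_one_left (by linear_combination e2)
  rw [hc₁' z₁ hz₁c, hc₂' z₂ hz₂c, hC₁', hC₂']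
  have hinv : c₂ * c₂⁻¹ = 1 := mul_inv_cancel₀ hc₂0
  field_simp
  linear_combination (ζ₁ z₁ / c₂) * hkey + (ζ₁ b' / c₂) * e4 -
    (ζ₁ z₁ * ζ₂ (φ b') - ζ₁ b' * ζ₂ z₂) * hinv
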